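/- Let S ⊆ R be well-typed SRSs over a typed signature Σ. Then S is string terminating relative to R (i.e., →_S is terminating relative to →_R) if and only if S is string terminating relative to R in the typed setting, i.e., every infinite →_R-reduction consisting of well-typed strings contains only finitely many →_S-steps. -/

import Mathlib

namespace CycleRewriting

/-- A binary relation is terminating if there is no infinite reduction sequence. -/
def Terminating {beta : Type*} (r : beta → beta → Prop) : Prop :=
  ¬ ∃ f : ℕ → beta, ∀ n : ℕ, r (f n) (f (n + 1))

/-- `r₁` is terminating relative to `r₂` iff every infinite `r₂`-sequence contains only
finitely many `r₁`-steps. -/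
def RelTerminating {beta : Type*} (r₁ r₂ : beta → beta → Prop) : Prop :=
  ¬ ∃ f : ℕ → beta, (∀ n : ℕ, r₂ (f n) (f (n + 1))) ∧
      {n : ℕ | r₁ (f n) (f (n + 1))}.Infinite

/-- The string rewrite relation of an SRS `R`. -/
def Step {α : Type*} (R : Set (List α × List α)) (x y : List α) : Prop :=
  ∃ u v l r, (l, r) ∈ R ∧ x = u ++ l ++ v ∧ y = u ++ r ++ v

/-- The prefix rewrite relation of an SRS `R`. -/
def PrefixStep {α : Type*} (R : Set (List α × List α)) (x y : List α) : Prop :=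
  ∃ l r w, (l, r) ∈ R ∧ x = l ++ w ∧ y = r ++ w

/-- The rotation equivalence `u ~ v` iff `u = w₁w₂` and `v = w₂w₁`. -/
def Sim {α : Type*} (u v : List α) : Prop :=
  ∃ w₁ w₂, u = w₁ ++ w₂ ∧ v = w₂ ++ w₁

/-- The cycle rewrite relation of an SRS `R` (on representatives of `Sim`-classes):
`[u] ∘→_R [v]` iff there are a rule `(l, r) ∈ R` and `w` with `l ++ w ∈ [u]` and
`r ++ w ∈ [v]`. -/
def CycleStep {α : Type*} (R : Set (List α × List α)) (x y : List α) : Prop :=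
  ∃ l r w, (l, r) ∈ R ∧ Sim (l ++ w) x ∧ Sim (r ++ w) y

/-- The shift relation `↷`: move the first symbol of a string to its end. -/
def Rot {α : Type*} (u v : List α) : Prop :=
  ∃ a w, u = a :: w ∧ v = w ++ [a]

/-- `k`-fold composition of a relation. -/
def RelPow {beta : Type*} (r : beta → beta → Prop) : ℕ → beta → beta → Prop
  | 0 => Eq
  | n + 1 => Relation.Comp r (RelPow r n)

/-- `lenSRS R` is the maximal length of a left-hand side of a rule of `R`. -/
noncomputable def lenSRS {α : Type*} (R : Set (List α × List α)) : ℕ :=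
  sSup ((fun p : List α × List α => p.1.length) '' R)

/-- A string is well-typed iff `source aᵢ = target aᵢ₊₁` for all consecutive symbols. -/
def WTStr {α T : Type*} (source target : α → T) (w : List α) : Prop :=
  List.Chain' (fun a b => source a = target b) w

/-- The source of a string: the source of its last symbol. -/
def strSource {α T : Type*} (source : α → T) (w : List α) : Option T :=
  w.getLast?.map source

/-- The target of a string: the target of its first symbol. -/
def strTarget {α T : Type*} (target : α → T) (w : List α) : Option T :=
  w.head?.map target

/-- An SRS is well-typed if all left-hand sides are nonempty and for every rule `ℓ → r`:
either `r = ε` and `source ℓ = target ℓ`, or `r ≠ ε`, `source ℓ = source r` and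
`target ℓ = target r` (with both sides well-typed strings). -/
def WTSRS {α T : Type*} (source target : α → T) (R : Set (List α × List α)) : Prop :=
  ∀ p ∈ R, p.1 ≠ [] ∧ WTStr source target p.1 ∧ WTStr source target p.2 ∧
    (p.2 = [] → strSource source p.1 = strTarget target p.1) ∧
    (p.2 ≠ [] → strSource source p.1 = strSource source p.2 ∧
                strTarget target p.1 = strTarget target p.2)

section Blocks

variable {α T : Type*} (source target : α → T)

/-- "Not linked": the junction between two blocks is a breakpoint. -/
def NL (b c : List α) : Prop :=
  ∀ x ∈ b.getLast?, ∀ y ∈ c.head?, source x ≠ target y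

/-- `L` is the maximal well-typed block decomposition of `u`. -/
def Decomp (u : List α) (L : List (List α)) : Prop :=
  u = L.flatten ∧ (∀ b ∈ L, b ≠ [] ∧ WTStr source target b) ∧
    List.Chain' (NL source target) L

variable {source target}

lemma exists_decomp (u : List α) : ∃ L, Decomp source target u L := by
  induction u with
  | nil => exact ⟨[], rfl, by simp, List.isChain_nil⟩
  | cons a w ih =>
    obtain ⟨L, hj, hb, hc⟩ := ih
    match L with
    | [] =>
      refine ⟨[[a]], ?_, ?_, ?_⟩
      · simp at hj; simp [hj]
      · intro b hb'; simp at hb'; subst hb'; exact ⟨by simp, List.isChain_singleton a⟩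
      · exact List.isChain_singleton _
    | b :: L' =>
      have hbne : b ≠ [] := (hb b (by simp)).1
      have hhead : b.head? = some (b.head hbne) := List.head?_eq_head hbne
      by_cases hlink : source a = target (b.head hbne)
      · refine ⟨(a :: b) :: L', ?_, ?_, ?_⟩
        · simp [hj]
        · intro c hc'
          rcases List.mem_cons.1 hc' with h | h
          · subst h
            refine ⟨by simp, ?_⟩
            have hwt := (hb b (by simp)).2
            unfold WTStr at hwt ⊢
            rw [List.Chain', List.isChain_cons]
            refine ⟨?_, hwt⟩
            intro y hy
            rw [hhead] at hy
            cases hy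
            exact hlink
          · exact hb c (by simp [h])
        · rcases L' with _ | ⟨c, L''⟩
          · exact List.isChain_singleton _
          · rw [List.Chain', List.isChain_cons_cons] at hc ⊢
            refine ⟨?_, hc.2⟩
            intro x hx y hy
            have heq : (a :: b).getLast? = b.getLast? := by
              rw [List.getLast?_eq_getLast (by simp), List.getLast?_eq_getLast hbne,
                List.getLast_cons hbne]
            rw [heq] at hx
            exact hc.1 x hx y hy
      · refine ⟨[a] :: b :: L', ?_, ?_, ?_⟩
        · simp [hj]
        · intro c hc'
          rcases List.mem_cons.1 hc' with h | h
          · subst h; exact ⟨by simp, List.isChain_singleton a⟩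
          · exact hb c h
        · rw [List.Chain', List.isChain_cons_cons]
          refine ⟨?_, hc⟩
          intro x hx y hy
          simp at hx; subst hx
          rw [hhead] at hy
          cases hy
          exact hlink

lemma decomp_nil {L : List (List α)} (h : Decomp source target [] L) : L = [] := by
  obtain ⟨hj, hb, -⟩ := h
  cases L with
  | nil => rfl
  | cons b L' =>
    exact absurd ((List.flatten_eq_nil_iff.1 hj.symm) b (by simp)) (hb b (by simp)).1

/-- Helper for uniqueness: the first block of a decomposition cannot be a proper
prefix of a well-typed prefix of the string. -/
lemma decomp_first_not_shorter {u : List α} {b d rest : List α} {L' : List (List α)}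
    (h : Decomp source target u (b :: L')) (hwt : WTStr source target (b ++ d))
    (hd : d ≠ []) (hu : u = b ++ (d ++ rest)) : False := by
  obtain ⟨hj, hb, hc⟩ := h
  have hbne : b ≠ [] := (hb b (by simp)).1
  have hflat : L'.flatten = d ++ rest := by
    have : b ++ L'.flatten = b ++ (d ++ rest) := by
      rw [← hu, hj]; simp
    exact List.append_cancel_left this
  have hL'ne : L' ≠ [] := by
    intro h0
    rw [h0] at hflat
    simp only [List.flatten_nil] at hflat
    exact hd (List.append_eq_nil_iff.mp hflat.symm).1
  match L', hL'ne with
  | b₂ :: L'', _ =>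
    have hb₂ne : b₂ ≠ [] := (hb b₂ (by simp)).1
    have hnl : NL source target b b₂ := (List.isChain_cons_cons.1 hc).1
    have hhead : b₂.head? = d.head? := by
      have : (b₂ ++ L''.flatten).head? = (d ++ rest).head? := by
        rw [← hflat]; simp
      rwa [List.head?_append_of_ne_nil _ hb₂ne, List.head?_append_of_ne_nil _ hd] at this
    have hlk := (List.isChain_append.1 hwt).2.2
    have hx := List.getLast?_eq_getLast (l := b) hbne
    have hy := List.head?_eq_head hd
    exact hnl _ hx _ (hhead ▸ hy) (hlk _ hx _ hy)

lemma decomp_unique {u : List α} {L M : List (List α)}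
    (hL : Decomp source target u L) (hM : Decomp source target u M) : L = M := by
  induction L generalizing u M with
  | nil =>
    have : u = [] := by rw [hL.1]; rfl
    subst this
    exact (decomp_nil hM).symm
  | cons b L' ih =>
    have hbne : b ≠ [] := (hL.2.1 b (by simp)).1
    match M with
    | [] =>
      exfalso
      have : u = [] := by rw [hM.1]; rfl
      subst this
      exact hbne (List.flatten_eq_nil_iff.1 hL.1.symm b (by simp))
    | c :: M' =>
      have hcne : c ≠ [] := (hM.2.1 c (by simp)).1
      have heq : b ++ L'.flatten = c ++ M'.flatten := by
        rw [← List.flatten_cons, ← List.flatten_cons, ← hL.1, ← hM.1]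
      have hbc : b = c := by
        rcases List.append_eq_append_iff.1 heq with ⟨d, hcd, hrest⟩ | ⟨d, hbd, hrest⟩
        · rcases eq_or_ne d [] with h0 | h0
          · rw [h0, List.append_nil] at hcd; exact hcd.symm
          · exact absurd (decomp_first_not_shorter (rest := M'.flatten) hL (hcd ▸ (hM.2.1 c (by simp)).2)
              h0 (by rw [hL.1]; simp [hrest])) (fun h => h)
        · rcases eq_or_ne d [] with h0 | h0
          · rw [h0, List.append_nil] at hbd; exact hbd
          · exact absurd (decomp_first_not_shorter (rest := L'.flatten) hM (hbd ▸ (hL.2.1 b (by simp)).2)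
              h0 (by rw [hM.1]; simp [hrest])) (fun h => h)
      subst hbc
      have hLM' : L'.flatten = M'.flatten := List.append_cancel_left heq
      have hL' : Decomp source target L'.flatten L' :=
        ⟨rfl, fun x hx => hL.2.1 x (by simp [hx]), (List.isChain_cons.1 hL.2.2).2⟩
      have hM'' : Decomp source target L'.flatten M' :=
        ⟨hLM', fun x hx => hM.2.1 x (by simp [hx]), (List.isChain_cons.1 hM.2.2).2⟩
      rw [ih hL' hM'']


variable (source target)

noncomputable def blocks (u : List α) : List (List α) :=
  (exists_decomp (source := source) (target := target) u).choose

variable {source target}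

lemma blocks_spec (u : List α) : Decomp source target u (blocks source target u) :=
  (exists_decomp u).choose_spec

lemma blocks_eq {u : List α} {L : List (List α)} (h : Decomp source target u L) :
    blocks source target u = L :=
  decomp_unique (blocks_spec u) h

/-- Split off the last block of `p` if it links to type `tH` on the right. -/
lemma split_left (p : List α) (tH : T) :
    ∃ (P : List (List α)) (X : List α),
      p = P.flatten ++ X ∧ WTStr source target X ∧
      (∀ x ∈ X.getLast?, source x = tH) ∧
      (∀ b ∈ P, b ≠ [] ∧ WTStr source target b) ∧
      (X = [] → Decomp source target p P) ∧
      (∀ B : List α, (B.head? = X.head? ∧ X ≠ []) ∨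
          (X = [] ∧ ∃ c, B.head? = some c ∧ target c = tH) →
        List.Chain' (NL source target) (P ++ [B])) := by
  obtain ⟨P₀, hP₀⟩ := exists_decomp (source := source) (target := target) p
  rcases List.eq_nil_or_concat P₀ with h0 | ⟨P', bp, h0⟩
  · subst h0
    refine ⟨[], [], ?_, List.isChain_nil, by simp, by simp, fun _ => hP₀, ?_⟩
    · rw [hP₀.1]; rfl
    · intro B _; exact List.isChain_singleton _
  · rw [List.concat_eq_append] at h0
    subst h0
    have hbpne : bp ≠ [] := (hP₀.2.1 bp (by simp)).1
    have hbpwt : WTStr source target bp := (hP₀.2.1 bp (by simp)).2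
    have hplast : p.getLast? = bp.getLast? := by
      rw [hP₀.1]
      simp only [List.flatten_append, List.flatten_cons, List.flatten_nil, List.append_nil]
      exact List.getLast?_append_of_ne_nil _ hbpne
    have hchainP' : List.Chain' (NL source target) P' :=
      (List.isChain_append.1 hP₀.2.2).1
    have hjunct : ∀ x ∈ P'.getLast?, ∀ y ∈ [bp].head?, NL source target x y :=
      (List.isChain_append.1 hP₀.2.2).2.2
    by_cases hlk : source (bp.getLast hbpne) = tH
    · refine ⟨P', bp, ?_, hbpwt, ?_, ?_, by simp [hbpne], ?_⟩
      · rw [hP₀.1]; simp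
      · intro x hx
        rw [List.getLast?_eq_getLast hbpne, Option.mem_def, Option.some.injEq] at hx
        subst hx; exact hlk
      · intro b hb; exact hP₀.2.1 b (by simp [hb])
      · intro B hB
        rcases hB with ⟨hBh, -⟩ | ⟨h0, -⟩
        · rw [List.Chain', List.isChain_append]
          refine ⟨hchainP', List.isChain_singleton _, ?_⟩
          intro x hx y hy
          simp only [List.head?_cons, Option.mem_def, Option.some.injEq] at hy
          subst hy
          intro z hz w hw
          rw [Option.mem_def, hBh] at hw
          exact hjunct x hx bp (by simp) z hz w hw
        · exact absurd h0 hbpne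
    · refine ⟨P' ++ [bp], [], by simp [hP₀.1], List.isChain_nil, by simp, hP₀.2.1,
        fun _ => hP₀, ?_⟩
      intro B hB
      rcases hB with ⟨-, hne⟩ | ⟨-, c, hc, htc⟩
      · exact absurd rfl hne
      · rw [List.append_assoc]
        have h2 : [bp] ++ [B] = [bp, B] := rfl
        rw [h2, List.Chain', List.isChain_append]
        refine ⟨hchainP', ?_, ?_⟩
        · refine List.isChain_pair.2 ?_
          intro x hx y hy
          rw [List.getLast?_eq_getLast hbpne, Option.mem_def, Option.some.injEq] at hx
          subst hx
          rw [Option.mem_def, hc, Option.some.injEq] at hy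
          subst hy
          rw [htc]
          exact hlk
        · intro x hx y hy
          simp only [List.head?_cons, Option.mem_def, Option.some.injEq] at hy
          subst hy
          exact hjunct x hx bp (by simp)

/-- Split off the first block of `q` if it links to type `tS` on the left. -/
lemma split_right (q : List α) (tS : T) :
    ∃ (Q : List (List α)) (Y : List α),
      q = Y ++ Q.flatten ∧ WTStr source target Y ∧
      (∀ y ∈ Y.head?, tS = target y) ∧
      (∀ b ∈ Q, b ≠ [] ∧ WTStr source target b) ∧
      (Y = [] → Decomp source target q Q) ∧
      (∀ B : List α, (B.getLast? = Y.getLast? ∧ Y ≠ []) ∨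
          (Y = [] ∧ ∃ c, B.getLast? = some c ∧ source c = tS) →
        List.Chain' (NL source target) (B :: Q)) := by
  obtain ⟨Q₀, hQ₀⟩ := exists_decomp (source := source) (target := target) q
  match Q₀, hQ₀ with
  | [], hQ₀ =>
    refine ⟨[], [], ?_, List.isChain_nil, by simp, by simp, fun _ => hQ₀, ?_⟩
    · rw [hQ₀.1]; rfl
    · intro B _; exact List.isChain_singleton _
  | bq :: Q', hQ₀ =>
    have hbqne : bq ≠ [] := (hQ₀.2.1 bq (by simp)).1
    have hbqwt : WTStr source target bq := (hQ₀.2.1 bq (by simp)).2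
    have hchainQ' : List.Chain' (NL source target) Q' :=
      (List.isChain_cons.1 hQ₀.2.2).2
    have hjunct : ∀ y ∈ Q'.head?, NL source target bq y :=
      (List.isChain_cons.1 hQ₀.2.2).1
    by_cases hlk : tS = target (bq.head hbqne)
    · refine ⟨Q', bq, ?_, hbqwt, ?_, ?_, by simp [hbqne], ?_⟩
      · rw [hQ₀.1]; simp
      · intro y hy
        rw [List.head?_eq_head hbqne, Option.mem_def, Option.some.injEq] at hy
        subst hy; exact hlk
      · intro b hb; exact hQ₀.2.1 b (by simp [hb])
      · intro B hB
        rcases hB with ⟨hBl, -⟩ | ⟨h0, -⟩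
        · rw [List.Chain', List.isChain_cons]
          refine ⟨?_, hchainQ'⟩
          intro y hy x hx w hw
          rw [Option.mem_def, hBl] at hx
          exact hjunct y hy x hx w hw
        · exact absurd h0 hbqne
    · refine ⟨bq :: Q', [], by simp [hQ₀.1], List.isChain_nil, by simp, hQ₀.2.1,
        fun _ => hQ₀, ?_⟩
      intro B hB
      rcases hB with ⟨-, hne⟩ | ⟨-, c, hc, hsc⟩
      · exact absurd rfl hne
      · rw [List.Chain', List.isChain_cons]
        refine ⟨?_, hQ₀.2.2⟩
        intro y hy x hx w hw
        simp only [List.head?_cons, Option.mem_def, Option.some.injEq] at hy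
        subst hy
        rw [Option.mem_def, hc, Option.some.injEq] at hx
        subst hx
        rw [Option.mem_def, List.head?_eq_head hbqne, Option.some.injEq] at hw
        subst hw
        rw [hsc]
        exact hlk


/-- Glue the outputs of `split_left` and `split_right` around a well-typed middle part. -/
lemma glue {p q mid : List α} {P Q : List (List α)} {X Y : List α} {tH tS : T}
    (hpX : p = P.flatten ++ X) (hwX : WTStr source target X)
    (hXl : ∀ x ∈ X.getLast?, source x = tH)
    (hPg : ∀ b ∈ P, b ≠ [] ∧ WTStr source target b)
    (hPch : ∀ B : List α, (B.head? = X.head? ∧ X ≠ []) ∨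
        (X = [] ∧ ∃ c, B.head? = some c ∧ target c = tH) →
      List.Chain' (NL source target) (P ++ [B]))
    (hqY : q = Y ++ Q.flatten) (hwY : WTStr source target Y)
    (hYh : ∀ y ∈ Y.head?, tS = target y)
    (hQg : ∀ b ∈ Q, b ≠ [] ∧ WTStr source target b)
    (hQch : ∀ B : List α, (B.getLast? = Y.getLast? ∧ Y ≠ []) ∨
        (Y = [] ∧ ∃ c, B.getLast? = some c ∧ source c = tS) →
      List.Chain' (NL source target) (B :: Q))
    (hwm : WTStr source target mid) (hmh : ∀ y ∈ mid.head?, target y = tH)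
    (hml : ∀ x ∈ mid.getLast?, source x = tS)
    (hne : X ++ mid ++ Y ≠ []) (hts : mid = [] → tH = tS) :
    Decomp source target (p ++ mid ++ q) (P ++ (X ++ mid ++ Y) :: Q) := by
  have hBhead : (X ++ mid ++ Y).head? = X.head? ∧ X ≠ [] ∨
      X = [] ∧ ∃ c, (X ++ mid ++ Y).head? = some c ∧ target c = tH := by
    rcases eq_or_ne X [] with hX | hX
    · right
      refine ⟨hX, ?_⟩
      subst hX
      rcases eq_or_ne mid [] with hm | hm
      · subst hm
        simp only [List.nil_append] at hne ⊢
        refine ⟨Y.head hne, List.head?_eq_head hne, ?_⟩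
        rw [hts rfl]
        exact (hYh _ (List.head?_eq_head hne)).symm
      · simp only [List.nil_append]
        rw [List.head?_append_of_ne_nil _ hm]
        exact ⟨mid.head hm, List.head?_eq_head hm, hmh _ (List.head?_eq_head hm)⟩
    · left
      rw [List.append_assoc, List.head?_append_of_ne_nil _ hX]
      exact ⟨rfl, hX⟩
  have hBlast : (X ++ mid ++ Y).getLast? = Y.getLast? ∧ Y ≠ [] ∨
      Y = [] ∧ ∃ c, (X ++ mid ++ Y).getLast? = some c ∧ source c = tS := by
    rcases eq_or_ne Y [] with hY | hY
    · right
      refine ⟨hY, ?_⟩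
      subst hY
      rcases eq_or_ne mid [] with hm | hm
      · subst hm
        simp only [List.append_nil] at hne ⊢
        refine ⟨X.getLast hne, List.getLast?_eq_getLast hne, ?_⟩
        rw [hXl _ (List.getLast?_eq_getLast hne), hts rfl]
      · rw [List.append_nil, List.getLast?_append_of_ne_nil _ hm]
        exact ⟨mid.getLast hm, List.getLast?_eq_getLast hm,
          hml _ (List.getLast?_eq_getLast hm)⟩
    · left
      rw [List.getLast?_append_of_ne_nil _ hY]
      exact ⟨rfl, hY⟩
  have hchainL : List.Chain' (NL source target) (P ++ [X ++ mid ++ Y]) := hPch _ hBhead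
  have hchainR : List.Chain' (NL source target) ((X ++ mid ++ Y) :: Q) := hQch _ hBlast
  refine ⟨?_, ?_, ?_⟩
  · rw [hpX, hqY]
    simp
  · intro b hb
    rcases List.mem_append.1 hb with hb | hb
    · exact hPg b hb
    · rcases List.mem_cons.1 hb with hb | hb
      · subst hb
        refine ⟨hne, ?_⟩
        unfold WTStr
        rw [List.append_assoc, List.Chain', List.isChain_append]
        refine ⟨hwX, ?_, ?_⟩
        · rw [List.isChain_append]
          refine ⟨hwm, hwY, ?_⟩
          intro x hx y hy
          rw [hml x hx]
          exact hYh y hy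
        · intro x hx y hy
          rw [hXl x hx]
          rcases eq_or_ne mid [] with hm | hm
          · subst hm
            simp only [List.nil_append] at hy
            rw [hts rfl]
            exact hYh y hy
          · rw [List.head?_append_of_ne_nil _ hm] at hy
            exact (hmh y hy).symm
      · exact hQg b hb
  · rw [List.Chain', List.isChain_append]
    refine ⟨(List.isChain_append.1 hchainL).1, hchainR, ?_⟩
    intro x hx y hy
    simp only [List.head?_cons, Option.mem_def, Option.some.injEq] at hy
    subst hy
    exact (List.isChain_append.1 hchainL).2.2 x hx _ (by simp)

/-- Concatenating two decomposed strings: the blocks can only merge. -/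
lemma decomp_append_le {p q : List α} {P Q : List (List α)}
    (hP : Decomp source target p P) (hQ : Decomp source target q Q) :
    ∃ M, Decomp source target (p ++ q) M ∧ M.length ≤ P.length + Q.length := by
  match Q, hQ with
  | [], hQ =>
    have : q = [] := by rw [hQ.1]; rfl
    subst this
    exact ⟨P, by simpa using hP, by simp⟩
  | bq :: Q', hQ =>
    rcases List.eq_nil_or_concat P with h0 | ⟨P', bp, h0⟩
    · subst h0
      have : p = [] := by rw [hP.1]; rfl
      subst this
      exact ⟨bq :: Q', by simpa using hQ, by simp⟩
    · rw [List.concat_eq_append] at h0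
      subst h0
      have hbpne : bp ≠ [] := (hP.2.1 bp (by simp)).1
      have hbqne : bq ≠ [] := (hQ.2.1 bq (by simp)).1
      have hflat : p ++ q = P'.flatten ++ (bp ++ bq) ++ Q'.flatten := by
        rw [hP.1, hQ.1]; simp
      by_cases hlk : source (bp.getLast hbpne) = target (bq.head hbqne)
      · refine ⟨P' ++ (bp ++ bq) :: Q', ⟨?_, ?_, ?_⟩, ?_⟩
        · rw [hflat]; simp
        · intro b hb
          rcases List.mem_append.1 hb with hb | hb
          · exact hP.2.1 b (by simp [hb])
          · rcases List.mem_cons.1 hb with hb | hb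
            · subst hb
              refine ⟨by simp [hbpne], ?_⟩
              unfold WTStr
              rw [List.Chain', List.isChain_append]
              refine ⟨(hP.2.1 bp (by simp)).2, (hQ.2.1 bq (by simp)).2, ?_⟩
              intro x hx y hy
              rw [List.getLast?_eq_getLast hbpne, Option.mem_def, Option.some.injEq] at hx
              rw [List.head?_eq_head hbqne, Option.mem_def, Option.some.injEq] at hy
              subst hx; subst hy; exact hlk
            · exact hQ.2.1 b (by simp [hb])
        · rw [List.Chain', List.isChain_append]
          refine ⟨(List.isChain_append.1 hP.2.2).1, ?_, ?_⟩
          · rw [List.isChain_cons]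
            refine ⟨?_, (List.isChain_cons.1 hQ.2.2).2⟩
            intro y hy x hx w hw
            rw [Option.mem_def, List.getLast?_append_of_ne_nil _ hbqne] at hx
            exact (List.isChain_cons.1 hQ.2.2).1 y hy x hx w hw
          · intro x hx y hy
            simp only [List.head?_cons, Option.mem_def, Option.some.injEq] at hy
            subst hy
            intro z hz w hw
            rw [Option.mem_def, List.head?_append_of_ne_nil _ hbpne] at hw
            exact (List.isChain_append.1 hP.2.2).2.2 x hx bp (by simp) z hz w hw
        · simp only [List.length_append, List.length_cons]; omega
      · refine ⟨(P' ++ [bp]) ++ bq :: Q', ⟨?_, ?_, ?_⟩, ?_⟩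
        · rw [hP.1, hQ.1]; simp
        · intro b hb
          rcases List.mem_append.1 hb with hb | hb
          · exact hP.2.1 b hb
          · exact hQ.2.1 b hb
        · rw [List.Chain', List.isChain_append]
          refine ⟨hP.2.2, hQ.2.2, ?_⟩
          intro x hx y hy
          rw [Option.mem_def, List.getLast?_append_of_ne_nil _ (by simp : [bp] ≠ ([] : List (List α)))] at hx
          simp only [List.getLast?_singleton, Option.some.injEq] at hx
          subst hx
          simp only [List.head?_cons, Option.mem_def, Option.some.injEq] at hy
          subst hy
          intro z hz w hw
          rw [Option.mem_def, List.getLast?_eq_getLast hbpne, Option.some.injEq] at hz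
          rw [Option.mem_def, List.head?_eq_head hbqne, Option.some.injEq] at hw
          subst hz; subst hw
          exact hlk
        · simp only [List.length_append, List.length_cons]; omega
  

end Blocks

section StepBlocks

variable {α T : Type*} {source target : α → T}

lemma step_blocks {R : Set (List α × List α)} (hR : WTSRS source target R)
    {l r p q : List α} (hlr : (l, r) ∈ R) :
    (∃ P Q X Y, blocks source target (p ++ l ++ q) = P ++ (X ++ l ++ Y) :: Q ∧
        blocks source target (p ++ r ++ q) = P ++ (X ++ r ++ Y) :: Q) ∨
      (blocks source target (p ++ r ++ q)).length <
        (blocks source target (p ++ l ++ q)).length := by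
  obtain ⟨hlne, hwl, hwr, hre, hrne⟩ := hR (l, r) hlr
  set tH := target (l.head hlne) with htH
  set tS := source (l.getLast hlne) with htS
  obtain ⟨P, X, hpX, hwX, hXl, hPg, hXDec, hPch⟩ :=
    split_left (source := source) (target := target) p tH
  obtain ⟨Q, Y, hqY, hwY, hYh, hQg, hYDec, hQch⟩ :=
    split_right (source := source) (target := target) q tS
  have hmhl : ∀ y ∈ l.head?, target y = tH := by
    intro y hy
    rw [Option.mem_def, List.head?_eq_head hlne, Option.some.injEq] at hy
    subst hy; rfl
  have hmll : ∀ x ∈ l.getLast?, source x = tS := by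
    intro x hx
    rw [Option.mem_def, List.getLast?_eq_getLast hlne, Option.some.injEq] at hx
    subst hx; rfl
  have hu : Decomp source target (p ++ l ++ q) (P ++ (X ++ l ++ Y) :: Q) :=
    glue hpX hwX hXl hPg hPch hqY hwY hYh hQg hQch hwl hmhl hmll
      (by simp [hlne]) (fun h => absurd h hlne)
  have hbu := blocks_eq hu
  rcases eq_or_ne r [] with hr0 | hr0
  · have hts : tH = tS := by
      have h3 := hre hr0
      rw [strSource, strTarget, List.getLast?_eq_getLast hlne,
        List.head?_eq_head hlne] at h3
      simp only [Option.map_some, Option.some.injEq] at h3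
      exact h3.symm
    rcases eq_or_ne (X ++ Y) [] with hXY | hXY
    · have hX : X = [] := (List.append_eq_nil_iff.1 hXY).1
      have hY : Y = [] := (List.append_eq_nil_iff.1 hXY).2
      obtain ⟨M, hM, hMle⟩ := decomp_append_le (hXDec hX) (hYDec hY)
      right
      have hpq : p ++ r ++ q = p ++ q := by rw [hr0]; simp
      rw [hpq, blocks_eq hM, hbu]
      simp only [List.length_append, List.length_cons]
      omega
    · left
      refine ⟨P, Q, X, Y, hbu, ?_⟩
      have hv : Decomp source target (p ++ r ++ q) (P ++ (X ++ r ++ Y) :: Q) := by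
        rw [hr0]
        exact glue hpX hwX hXl hPg hPch hqY hwY hYh hQg hQch List.isChain_nil
          (by simp) (by simp) (by simpa using hXY) (fun _ => hts)
      exact blocks_eq hv
  · left
    have h1 := (hrne hr0).1
    have h2 := (hrne hr0).2
    have hmhr : ∀ y ∈ r.head?, target y = tH := by
      intro y hy
      rw [strTarget, strTarget, List.head?_eq_head hlne, Option.mem_def.1 hy] at h2
      simp only [Option.map_some, Option.some.injEq] at h2
      rw [← h2]
    have hmlr : ∀ x ∈ r.getLast?, source x = tS := by
      intro x hx
      rw [strSource, strSource, List.getLast?_eq_getLast hlne, Option.mem_def.1 hx] at h1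
      simp only [Option.map_some, Option.some.injEq] at h1
      rw [← h1]
    exact ⟨P, Q, X, Y, hbu,
      blocks_eq (glue hpX hwX hXl hPg hPch hqY hwY hYh hQg hQch hwr hmhr hmlr
        (by simp [hr0]) (fun h => absurd h hr0))⟩


lemma step_mono {R S' : Set (List α × List α)} (h : S' ⊆ R) {u v : List α}
    (hs : Step S' u v) : Step R u v := by
  obtain ⟨p, q, l, r, hlr, hu, hv⟩ := hs
  exact ⟨p, q, l, r, h hlr, hu, hv⟩

lemma step_blocks_step {R S' : Set (List α × List α)} (hR : WTSRS source target R)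
    (hS' : S' ⊆ R) {u v : List α} (h : Step S' u v) :
    (∃ P Q b b', blocks source target u = P ++ b :: Q ∧
        blocks source target v = P ++ b' :: Q ∧ Step S' b b') ∨
      (blocks source target v).length < (blocks source target u).length := by
  obtain ⟨p, q, l, r, hlr, hu, hv⟩ := h
  subst hu; subst hv
  rcases step_blocks hR (hS' hlr) with ⟨P, Q, X, Y, h1, h2⟩ | hlt
  · exact Or.inl ⟨P, Q, _, _, h1, h2, ⟨X, Y, l, r, hlr, rfl, rfl⟩⟩
  · exact Or.inr hlt

end StepBlocks

theorem main {α T : Type*} (source target : α → T)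
    (S R : Set (List α × List α)) (hSR : S ⊆ R)
    (hwtR : WTSRS source target R)
    (htyped : ¬ ∃ f : ℕ → List α, (∀ n : ℕ, Step R (f n) (f (n + 1))) ∧
          (∀ n : ℕ, WTStr source target (f n)) ∧
          {n : ℕ | Step S (f n) (f (n + 1))}.Infinite) :
    ¬ ∃ f : ℕ → List α, (∀ n : ℕ, Step R (f n) (f (n + 1))) ∧
      {n : ℕ | Step S (f n) (f (n + 1))}.Infinite := by
  classical
  rintro ⟨f, hfR, hfS⟩
  apply htyped
  set N : ℕ → ℕ := fun n => (blocks source target (f n)).length with hN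
  have hmono : ∀ n, N (n + 1) ≤ N n := by
    intro n
    rcases step_blocks_step hwtR (le_refl R) (hfR n) with ⟨P, Q, b, b', h1, h2, -⟩ | hlt
    · simp only [hN, h1, h2, List.length_append, List.length_cons]
      exact le_rfl
    · exact hlt.le
  have hmono' : ∀ a b, a ≤ b → N b ≤ N a := by
    intro a b hab
    induction hab with
    | refl => exact le_rfl
    | step _ ih => exact le_trans (hmono _) ih
  obtain ⟨n₀, hn₀⟩ : ∃ n₀, ∀ n, n₀ ≤ n → N n = N n₀ := by
    have hne : (Set.range N).Nonempty := ⟨N 0, 0, rfl⟩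
    obtain ⟨n₀, hn₀⟩ := Nat.sInf_mem hne
    refine ⟨n₀, fun n hn => le_antisymm (hmono' _ _ hn) ?_⟩
    rw [hn₀]
    exact Nat.sInf_le ⟨n, rfl⟩
  have hclean : ∀ n, n₀ ≤ n → ∀ (S' : Set (List α × List α)), S' ⊆ R →
      Step S' (f n) (f (n + 1)) →
      ∃ P Q b b', blocks source target (f n) = P ++ b :: Q ∧
        blocks source target (f (n + 1)) = P ++ b' :: Q ∧ Step S' b b' := by
    intro n hn S' hs hstep
    rcases step_blocks_step hwtR hs hstep with h | hlt
    · exact h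
    · exfalso
      have e1 : N n = N n₀ := hn₀ n hn
      have e2 : N (n + 1) = N n₀ := hn₀ (n + 1) (le_trans hn (by omega))
      simp only [hN] at e1 e2
      omega
  set Ai : ℕ → Set ℕ := fun i => {n | n₀ ≤ n ∧ ∃ P Q b b', P.length = i ∧
    blocks source target (f n) = P ++ b :: Q ∧
    blocks source target (f (n + 1)) = P ++ b' :: Q ∧ Step S b b'} with hAi
  obtain ⟨i, hik, hAiInf⟩ : ∃ i, i < N n₀ ∧ (Ai i).Infinite := by
    by_contra hcon
    push_neg at hcon
    have hfin : (⋃ i ∈ Set.Iio (N n₀), Ai i).Finite :=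
      Set.Finite.biUnion (Set.finite_Iio _) (fun i hi => (hcon i hi))
    have hsub : {n | Step S (f n) (f (n + 1))} \ {n | n < n₀} ⊆
        ⋃ i ∈ Set.Iio (N n₀), Ai i := by
      rintro n ⟨hn1, hn2⟩
      simp only [Set.mem_setOf_eq, not_lt] at hn1 hn2
      obtain ⟨P, Q, b, b', h1, h2, h3⟩ := hclean n hn2 S hSR hn1
      have hlen : P.length < N n₀ := by
        have e1 : N n = N n₀ := hn₀ n hn2
        have : N n = P.length + Q.length + 1 := by
          simp only [hN, h1, List.length_append, List.length_cons]; omega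
        omega
      exact Set.mem_biUnion hlen ⟨hn2, P, Q, b, b', rfl, h1, h2, h3⟩
    exact (Set.Infinite.mono hsub (hfS.diff (Set.finite_lt_nat n₀))) hfin
  set g : ℕ → List α := fun j => (blocks source target (f (n₀ + j))).getD i [] with hg
  have hlen : ∀ j, (blocks source target (f (n₀ + j))).length = N n₀ :=
    fun j => hn₀ _ (Nat.le_add_right _ _)
  have hgwt : ∀ j, g j ≠ [] ∧ WTStr source target (g j) := by
    intro j
    have hi : i < (blocks source target (f (n₀ + j))).length := by rw [hlen]; exact hik
    rw [hg]
    simp only [List.getD_eq_getElem _ _ hi]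
    exact (blocks_spec (f (n₀ + j))).2.1 _ (List.getElem_mem hi)
  have getD_eq : ∀ (P Q : List (List α)) (b : List α), i ≠ P.length →
      (P ++ b :: Q).getD i [] = (P ++ [] :: Q).getD i [] := by
    intro P Q b hne
    rcases Nat.lt_or_ge i P.length with hlt | hge
    · rw [List.getD_append _ _ _ _ hlt, List.getD_append _ _ _ _ hlt]
    · have hgt : P.length < i := lt_of_le_of_ne hge (fun h => hne h.symm)
      rw [List.getD_append_right _ _ _ _ hge, List.getD_append_right _ _ _ _ hge]
      have : i - P.length = (i - P.length - 1) + 1 := by omega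
      rw [this]
      simp
  have getD_mid : ∀ (P Q : List (List α)) (b : List α), i = P.length →
      (P ++ b :: Q).getD i [] = b := by
    intro P Q b hne
    subst hne
    rw [List.getD_append_right _ _ _ _ le_rfl]
    simp
  have hgstep : ∀ j, g (j + 1) = g j ∨ Step R (g j) (g (j + 1)) := by
    intro j
    obtain ⟨P, Q, b, b', h1, h2, h3⟩ :=
      hclean (n₀ + j) (Nat.le_add_right _ _) R (le_refl R) (hfR (n₀ + j))
    have hj1 : f (n₀ + (j + 1)) = f ((n₀ + j) + 1) := by rw [Nat.add_assoc]
    by_cases hi : i = P.length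
    · right
      rw [hg]
      simp only [hj1, h1, h2, getD_mid P Q _ hi]
      exact h3
    · left
      rw [hg]
      simp only [hj1, h1, h2]
      rw [getD_eq P Q b hi, getD_eq P Q b' hi]
  have hgS : ∀ j, (n₀ + j) ∈ Ai i → Step S (g j) (g (j + 1)) ∧ Step R (g j) (g (j + 1)) := by
    intro j hj
    obtain ⟨-, P, Q, b, b', hP, h1, h2, h3⟩ := hj
    have hj1 : f (n₀ + (j + 1)) = f ((n₀ + j) + 1) := by rw [Nat.add_assoc]
    have e1 : g j = b := by rw [hg]; simp only [h1]; exact getD_mid P Q b hP.symm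
    have e2 : g (j + 1) = b' := by
      rw [hg]; simp only [hj1, h2]; exact getD_mid P Q b' hP.symm
    rw [e1, e2]
    exact ⟨h3, step_mono hSR h3⟩
  set B : Set ℕ := {j | Step R (g j) (g (j + 1))} with hB
  have hA2 : {j | (n₀ + j) ∈ Ai i}.Infinite := by
    apply Set.Infinite.of_image (fun j => n₀ + j)
    apply Set.Infinite.mono ?_ hAiInf
    rintro n hn
    refine ⟨n - n₀, ?_, ?_⟩
    · show n₀ + (n - n₀) ∈ Ai i
      rwa [Nat.add_sub_cancel' hn.1]
    · show n₀ + (n - n₀) = n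
      have := hn.1
      omega
  have hA2B : {j | (n₀ + j) ∈ Ai i} ⊆ B := fun j hj => (hgS j hj).2
  have hBinf : B.Infinite := hA2.mono hA2B
  have hconst : ∀ a b, a ≤ b → (∀ n, a ≤ n → n < b → n ∉ B) → g b = g a := by
    intro a b hab
    induction hab with
    | refl => intro _; rfl
    | @step b hb ih =>
      intro hgap
      have hbB : b ∉ B := hgap b hb (by omega)
      have e1 : g (b + 1) = g b := by
        rcases hgstep b with h | h
        · exact h
        · exact absurd h hbB
      rw [e1]
      exact ih (fun n hn hnb => hgap n hn (by omega))
  set e : ℕ → ℕ := fun j => Nat.nth (· ∈ B) j with hev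
  have heB : ∀ j, e j ∈ B := Nat.nth_mem_of_infinite hBinf
  have hemono : StrictMono e := Nat.nth_strictMono hBinf
  have hgap : ∀ j n, e j < n → n < e (j + 1) → n ∉ B := by
    intro j n h1 h2 hn
    have hc : Nat.nth (· ∈ B) (Nat.count (· ∈ B) n) = n := Nat.nth_count hn
    rw [← hc] at h1 h2
    have c1 := hemono.lt_iff_lt.1 h1
    have c2 := hemono.lt_iff_lt.1 h2
    omega
  have hstep2 : ∀ j, g (e (j + 1)) = g (e j + 1) := by
    intro j
    apply hconst
    · exact hemono (by omega)
    · intro n hn hnlt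
      exact hgap j n (by omega) hnlt
  refine ⟨fun j => g (e j), ?_, fun j => (hgwt _).2, ?_⟩
  · intro j
    show Step R (g (e j)) (g (e (j + 1)))
    rw [hstep2 j]
    exact heB j
  · apply Set.Infinite.mono (s := (fun n => Nat.count (· ∈ B) n) '' {j | (n₀ + j) ∈ Ai i})
    · rintro j ⟨n, hn, rfl⟩
      have hnB : n ∈ B := hA2B hn
      have hc : e (Nat.count (· ∈ B) n) = n := Nat.nth_count hnB
      simp only [Set.mem_setOf_eq]
      rw [hstep2, hc]
      exact (hgS n hn).1
    · apply Set.Infinite.image ?_ hA2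
      intro n1 hn1 n2 hn2 hcount
      have c1 : e (Nat.count (· ∈ B) n1) = n1 := Nat.nth_count (hA2B hn1)
      have c2 : e (Nat.count (· ∈ B) n2) = n2 := Nat.nth_count (hA2B hn2)
      rw [← c1, ← c2]
      exact congrArg e hcount


/-- type introduction for relative string termination. -/
theorem type_introduction_relative {α T : Type*} [Finite α] (source target : α → T)
    (S R : Set (List α × List α)) (hfin : R.Finite) (hSR : S ⊆ R)
    (hwtS : WTSRS source target S) (hwtR : WTSRS source target R) :
    RelTerminating (Step S) (Step R) ↔
      ¬ ∃ f : ℕ → List α, (∀ n : ℕ, Step R (f n) (f (n + 1))) ∧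
          (∀ n : ℕ, WTStr source target (f n)) ∧
          {n : ℕ | Step S (f n) (f (n + 1))}.Infinite := by
  constructor
  · rintro h ⟨f, h1, -, h3⟩
    exact h ⟨f, h1, h3⟩
  · intro h
    exact main source target S R hSR hwtR h

end CycleRewriting
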